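/- One-step value decrease of the self-triggered MPC value function (key step of Theorem 2): in the self-triggered value-function setting, let x ∈ ℝⁿ and let i* ∈ I⁰ attain the minimum defining V(x). Then V(M^{(i*)} x) ≤ (1−ε)·V(x) + β, where β = α/p* − (1−ε)·α/γ. -/

import Mathlib

open Matrix Finset

/-- one-step value decrease of the self-triggered MPC value
function V(x) = min_{i ∈ I⁰} (α/i + xᵀ P⁽ⁱ⁾ x): if i* attains the minimum at x,
then V(M⁽ⁱ*⁾x) ≤ (1-ε)V(x) + β with β = α/p* - (1-ε)α/γ. -/
theorem self_triggered_one_step_decrease {n : ℕ}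
    (I0 : Finset ℕ) (hne : I0.Nonempty) (hpos : ∀ i ∈ I0, 0 < i)
    (γ : ℕ) (hγ : γ = I0.max' hne)
    (pstar : ℕ) (hpstar : pstar ∈ I0)
    (α : ℝ) (hα : 0 < α)
    (P : ℕ → Matrix (Fin n) (Fin n) ℝ) (hP : ∀ i ∈ I0, (P i).PosSemidef)
    (M : ℕ → Matrix (Fin n) (Fin n) ℝ)
    (ε : ℝ) (hε0 : 0 < ε) (hε1 : ε ≤ 1)
    (hcontr : ∀ i ∈ I0, ((1 - ε) • P i - (M i)ᵀ * P pstar * M i).PosSemidef)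
    (V : (Fin n → ℝ) → ℝ)
    (hV : ∀ x : Fin n → ℝ, V x = I0.inf' hne (fun i => α / (i : ℝ) + x ⬝ᵥ (P i *ᵥ x)))
    (x : Fin n → ℝ) (istar : ℕ) (histar : istar ∈ I0)
    (hattain : α / (istar : ℝ) + x ⬝ᵥ (P istar *ᵥ x) = V x) :
    V (M istar *ᵥ x) ≤ (1 - ε) * V x + (α / (pstar : ℝ) - (1 - ε) * (α / (γ : ℝ))) := by
  have hεnn : (0:ℝ) ≤ 1 - ε := by linarith
  -- step 1: V(Mx) ≤ α/pstar + (Mx)ᵀ P pstar (Mx)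
  have h1 : V (M istar *ᵥ x) ≤
      α / (pstar : ℝ) + (M istar *ᵥ x) ⬝ᵥ (P pstar *ᵥ (M istar *ᵥ x)) := by
    rw [hV]
    exact inf'_le _ hpstar
  -- rewrite the quadratic form
  have h2 : (M istar *ᵥ x) ⬝ᵥ (P pstar *ᵥ (M istar *ᵥ x))
      = x ⬝ᵥ (((M istar)ᵀ * P pstar * M istar) *ᵥ x) := by
    rw [← mulVec_mulVec, ← mulVec_mulVec, Matrix.dotProduct_mulVec x (M istar)ᵀ,
      vecMul_transpose]
  -- contraction inequality
  have h3 : x ⬝ᵥ (((M istar)ᵀ * P pstar * M istar) *ᵥ x)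
      ≤ (1 - ε) * (x ⬝ᵥ (P istar *ᵥ x)) := by
    have := (hcontr istar histar).dotProduct_mulVec_nonneg x
    simp only [sub_mulVec, dotProduct_sub, smul_mulVec, dotProduct_smul,
      smul_eq_mul, star_trivial] at this
    linarith
  -- α/istar ≥ α/γ
  have hiγ : (istar : ℝ) ≤ (γ : ℝ) := by
    exact_mod_cast by rw [hγ]; exact le_max' _ _ histar
  have hipos : (0:ℝ) < (istar : ℝ) := by exact_mod_cast hpos istar histar
  have h4 : α / (γ : ℝ) ≤ α / (istar : ℝ) :=
    div_le_div_of_nonneg_left hα.le hipos hiγ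
  have h5 : (1 - ε) * (x ⬝ᵥ (P istar *ᵥ x)) = (1 - ε) * (V x - α / (istar : ℝ)) := by
    rw [← hattain]; ring
  have := mul_le_mul_of_nonneg_left h4 hεnn
  calc V (M istar *ᵥ x) ≤ α / (pstar : ℝ) + x ⬝ᵥ (((M istar)ᵀ * P pstar * M istar) *ᵥ x) := by
        rw [← h2]; exact h1
    _ ≤ α / (pstar : ℝ) + (1 - ε) * (V x - α / (istar : ℝ)) := by rw [← h5]; linarith
    _ ≤ (1 - ε) * V x + (α / (pstar : ℝ) - (1 - ε) * (α / (γ : ℝ))) := by nlinarith
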